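/- Let I ⊆ ℕ be infinite and let J ⊆ ℕ be nonempty. Then M_I ∩ A_J is dense in A_J. -/

import Mathlib

open Metric Filter Set

/-- γ(x,R,M): the supremum of radii r>0 of open balls contained in B(x,R) \ M
(equal to 0 if no such ball exists, by `Real.sSup_empty`). -/
noncomputable def porGamma {X : Type*} [MetricSpace X] (x : X) (R : ℝ) (M : Set X) : ℝ :=
  sSup {r : ℝ | 0 < r ∧ ∃ z : X, Metric.ball z r ⊆ Metric.ball x R \ M}

/-- `M` is lower porous at `x`: liminf_{R→0+} 2γ(x,R,M)/R > 0. -/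
def LowerPorousAt {X : Type*} [MetricSpace X] (M : Set X) (x : X) : Prop :=
  0 < Filter.liminf (fun R => 2 * porGamma x R M / R) (nhdsWithin 0 (Set.Ioi 0))

/-- `M` is (upper) porous at `x`: limsup_{R→0+} 2γ(x,R,M)/R > 0. -/
def UpperPorousAt {X : Type*} [MetricSpace X] (M : Set X) (x : X) : Prop :=
  0 < Filter.limsup (fun R => 2 * porGamma x R M / R) (nhdsWithin 0 (Set.Ioi 0))

/-- A set is lower porous if it is lower porous at each of its points. -/
def LowerPorous {X : Type*} [MetricSpace X] (M : Set X) : Prop :=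
  ∀ x ∈ M, LowerPorousAt M x

/-- A set is (upper) porous if it is porous at each of its points. -/
def UpperPorous {X : Type*} [MetricSpace X] (M : Set X) : Prop :=
  ∀ x ∈ M, UpperPorousAt M x

/-- A set is σ-lower porous if it is a countable union of lower porous sets. -/
def SigmaLowerPorous {X : Type*} [MetricSpace X] (A : Set X) : Prop :=
  ∃ f : ℕ → Set X, (∀ n, LowerPorous (f n)) ∧ A = ⋃ n, f n

/-- A set is σ-(upper) porous if it is a countable union of porous sets. -/
def SigmaUpperPorous {X : Type*} [MetricSpace X] (A : Set X) : Prop :=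
  ∃ f : ℕ → Set X, (∀ n, UpperPorous (f n)) ∧ A = ⋃ n, f n

/-- The open sets `D_n ⊆ (0,1)`; `D_0 = ∅` and for `n ≥ 1`,
`D_n = ⋃_{i=0}^{3^{n-1}-1} ((1+3i)/3^n, (2+3i)/3^n)`. -/
noncomputable def Dset : ℕ → Set ℝ
  | 0 => ∅
  | (n + 1) =>
      ⋃ i ∈ Finset.range (3 ^ n),
        Set.Ioo ((1 + 3 * (i : ℝ)) / 3 ^ (n + 1)) ((2 + 3 * (i : ℝ)) / 3 ^ (n + 1))

/-- `M_n = ∂D_n`, the boundary of `D_n` in `ℝ`. -/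
noncomputable def Mset (n : ℕ) : Set ℝ := frontier (Dset n)

/-- `D_I = ⋃_{n ∈ I} D_n`. -/
noncomputable def DsetI (I : Set ℕ) : Set ℝ := ⋃ n ∈ I, Dset n

/-- `M_I = ⋃_{n ∈ I} M_n`. -/
noncomputable def MsetI (I : Set ℕ) : Set ℝ := ⋃ n ∈ I, Mset n

/-- `A_I = [0,1] \ D_I`. -/
noncomputable def AsetI (I : Set ℕ) : Set ℝ := Set.Icc 0 1 \ DsetI I

private lemma ediv_helper (p q r s : ℤ) (hp : 0 < p) (h : s = p * q + r)
    (h0 : 0 ≤ r) (h1 : r < p) : s / p = q := by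
  subst h
  rw [add_comm, Int.add_mul_ediv_left r q (ne_of_gt hp), Int.ediv_eq_zero_of_lt h0 h1, zero_add]

private lemma floor_div_int' (r : ℝ) (p : ℤ) (hp : 0 < p) : ⌊r / (p:ℝ)⌋ = ⌊r⌋ / p := by
  have hp' : (0:ℝ) < (p:ℝ) := by exact_mod_cast hp
  have h0 := Int.emod_nonneg ⌊r⌋ (ne_of_gt hp)
  have h1 := Int.emod_lt_of_pos ⌊r⌋ hp
  have hqr : ⌊r⌋ = p * (⌊r⌋ / p) + ⌊r⌋ % p := (Int.mul_ediv_add_emod _ _).symm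
  rw [Int.floor_eq_iff]
  constructor
  · rw [le_div_iff₀ hp']
    have : ((p * (⌊r⌋ / p) : ℤ) : ℝ) ≤ (⌊r⌋ : ℝ) := by exact_mod_cast by omega
    calc ((⌊r⌋ / p : ℤ) : ℝ) * p = ((p * (⌊r⌋ / p) : ℤ) : ℝ) := by push_cast; ring
      _ ≤ (⌊r⌋ : ℝ) := this
      _ ≤ r := Int.floor_le r
  · rw [div_lt_iff₀ hp']
    have h2 : (⌊r⌋ : ℝ) + 1 ≤ ((⌊r⌋ / p + 1 : ℤ) : ℝ) * p := by
      have : ⌊r⌋ + 1 ≤ (⌊r⌋ / p + 1) * p := by nlinarith [h0, h1, hqr]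
      exact_mod_cast this
    calc r < (⌊r⌋ : ℝ) + 1 := Int.lt_floor_add_one r
      _ ≤ _ := by push_cast at h2 ⊢; linarith

private lemma mem_Dset_succ {k : ℕ} {t : ℝ} :
    t ∈ Dset (k + 1) ↔ ∃ i : ℕ, i < 3 ^ k ∧ (1 + 3 * i : ℝ) < 3 ^ (k + 1) * t ∧
      (3:ℝ) ^ (k + 1) * t < 2 + 3 * i := by
  have h3 : (0:ℝ) < 3 ^ (k+1) := by positivity
  simp only [Dset, Set.mem_iUnion, Finset.mem_range, Set.mem_Ioo, exists_prop]
  constructor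
  · rintro ⟨i, hi, h1, h2⟩
    refine ⟨i, hi, ?_, ?_⟩
    · rw [div_lt_iff₀ h3] at h1; linarith
    · rw [lt_div_iff₀ h3] at h2; linarith
  · rintro ⟨i, hi, h1, h2⟩
    refine ⟨i, hi, ?_, ?_⟩
    · rw [div_lt_iff₀ h3]; linarith
    · rw [lt_div_iff₀ h3]; linarith

private lemma not_mem_Dset {m : ℕ} {t : ℝ} {c : ℤ}
    (h1 : (c:ℝ) ≤ 3 ^ m * t) (h2 : (3:ℝ) ^ m * t ≤ c + 1) (h3 : c % 3 ≠ 1) :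
    t ∉ Dset m := by
  cases m with
  | zero => simp [Dset]
  | succ k =>
    intro ht
    rw [mem_Dset_succ] at ht
    obtain ⟨i, _, ha, hb⟩ := ht
    have e1 : ((1 + 3 * i : ℤ) : ℝ) < ((c + 1 : ℤ) : ℝ) := by push_cast; linarith
    have e2 : ((c : ℤ) : ℝ) < ((2 + 3 * i : ℤ) : ℝ) := by push_cast; linarith
    have e1' : (1 + 3 * i : ℤ) < c + 1 := by exact_mod_cast e1
    have e2' : (c : ℤ) < 2 + 3 * i := by exact_mod_cast e2
    omega

private lemma mem_Dset_of_floor {k : ℕ} {t : ℝ} (ht0 : 0 ≤ t) (ht1 : t ≤ 1)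
    (h1 : ⌊(3:ℝ) ^ (k+1) * t⌋ % 3 = 1) (h2 : (3:ℝ) ^ (k+1) * t ≠ (⌊(3:ℝ) ^ (k+1) * t⌋ : ℝ)) :
    t ∈ Dset (k + 1) := by
  set c := ⌊(3:ℝ)^(k+1) * t⌋ with hc
  have hpow : (0:ℝ) < 3^(k+1) := by positivity
  have hc0 : 0 ≤ c := Int.floor_nonneg.mpr (mul_nonneg (le_of_lt hpow) ht0)
  have hub : (3:ℝ)^(k+1) * t ≤ ((3^(k+1) : ℤ) : ℝ) := by push_cast; nlinarith
  have hcle : c ≤ (3:ℤ)^(k+1) := by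
    have := Int.floor_le_floor hub
    rwa [Int.floor_intCast] at this
  have hsplit : (3:ℤ)^(k+1) = 3 * 3^k := by ring
  have hclt : c < 3 * 3^k := by omega
  have hile : c / 3 < 3^k := by omega
  have hige : 0 ≤ c / 3 := by omega
  have hcast : (((c/3).toNat : ℕ) : ℝ) = ((c/3 : ℤ) : ℝ) := by
    exact_mod_cast congrArg (fun z : ℤ => (z:ℝ)) (Int.toNat_of_nonneg hige)
  have hval : ((c/3 : ℤ) : ℝ) * 3 + 1 = (c : ℝ) := by
    exact_mod_cast congrArg (fun z : ℤ => (z:ℝ)) (by omega : (c/3) * 3 + 1 = c)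
  rw [mem_Dset_succ]
  refine ⟨(c / 3).toNat, ?_, ?_, ?_⟩
  · have : ((c/3).toNat : ℤ) < 3^k := by rwa [Int.toNat_of_nonneg hige]
    exact_mod_cast this
  · have hlow : (c : ℝ) ≤ 3^(k+1) * t := Int.floor_le _
    have hlow' : (c : ℝ) < 3^(k+1) * t := lt_of_le_of_ne hlow (by intro h; exact h2 h.symm)
    rw [hcast]; linarith
  · have hup : 3^(k+1) * t < (c : ℝ) + 1 := Int.lt_floor_add_one _
    rw [hcast]; linarith

private lemma endpoint_mem_Mset {k : ℕ} {a : ℤ} {i : ℕ} (hi : i < 3 ^ k)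
    (hia : a = 3 * i + 1 ∨ a = 3 * i + 2) :
    (a : ℝ) / 3 ^ (k+1) ∈ Mset (k+1) := by
  have h3 : (0:ℝ) < 3^(k+1) := by positivity
  have hkey : (3:ℝ)^(k+1) * ((a:ℝ) / 3^(k+1)) = (a:ℝ) := by field_simp
  have hopen : IsOpen (Dset (k+1)) := by
    show IsOpen (⋃ i ∈ Finset.range (3 ^ k), Set.Ioo _ _)
    exact isOpen_biUnion fun i _ => isOpen_Ioo
  rw [Mset, hopen.frontier_eq, Set.mem_diff]
  have hnum : (1 + 3*(i:ℝ)) ≤ (a:ℝ) ∧ (a:ℝ) ≤ 2 + 3*(i:ℝ) := by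
    rcases hia with h|h <;> constructor <;> (rw [h]; push_cast; linarith)
  constructor
  · have hsub : Set.Ioo ((1 + 3*(i:ℝ))/3^(k+1)) ((2 + 3*(i:ℝ))/3^(k+1)) ⊆ Dset (k+1) := by
      intro t ht
      rw [mem_Dset_succ]
      rw [Set.mem_Ioo] at ht
      obtain ⟨hta, htb⟩ := ht
      rw [div_lt_iff₀ h3] at hta
      rw [lt_div_iff₀ h3] at htb
      exact ⟨i, hi, by linarith, by linarith⟩
    have hne : (1 + 3*(i:ℝ))/3^(k+1) < (2 + 3*(i:ℝ))/3^(k+1) := by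
      gcongr
      linarith
    have hicc : (a:ℝ) / 3^(k+1) ∈ Set.Icc ((1 + 3*(i:ℝ))/3^(k+1)) ((2 + 3*(i:ℝ))/3^(k+1)) := by
      constructor
      · gcongr
        exact hnum.1
      · gcongr
        exact hnum.2
    have hIccsub : Set.Icc ((1 + 3*(i:ℝ))/3^(k+1)) ((2 + 3*(i:ℝ))/3^(k+1)) ⊆ closure (Dset (k+1)) := by
      rw [← closure_Ioo (ne_of_lt hne)]
      exact closure_mono hsub
    exact hIccsub hicc
  · rcases hia with h|h
    · refine not_mem_Dset (c := a - 1) ?_ ?_ (by omega)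
      · rw [hkey]; push_cast; linarith
      · rw [hkey]; push_cast; linarith
    · refine not_mem_Dset (c := a) ?_ ?_ (by omega)
      · rw [hkey]
      · rw [hkey]; push_cast; linarith

private lemma build {J : Set ℕ} {k : ℕ} {a : ℤ}
    (ha : a % 3 ≠ 0) (ha0 : 1 ≤ a) (ha1 : a ≤ 3 ^ (k+1) - 1)
    (H : ∀ m ∈ J, 1 ≤ m → m ≤ k → (a / 3 ^ (k + 1 - m)) % 3 ≠ 1) :
    (a : ℝ) / 3 ^ (k+1) ∈ Mset (k+1) ∩ AsetI J := by
  have h3 : (0:ℝ) < 3^(k+1) := by positivity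
  have hsplit : (3:ℤ)^(k+1) = 3 * 3^k := by ring
  have hkpos : (0:ℤ) < 3^k := by positivity
  -- Mset membership
  have hM : (a : ℝ) / 3 ^ (k+1) ∈ Mset (k+1) := by
    have hia' : a = 3 * (a/3) + 1 ∨ a = 3 * (a/3) + 2 := by omega
    have hige : 0 ≤ a / 3 := by omega
    have hilt : a / 3 < 3 ^ k := by omega
    have hcast : (((a/3).toNat : ℤ)) = a / 3 := Int.toNat_of_nonneg hige
    refine endpoint_mem_Mset (i := (a/3).toNat) ?_ ?_
    · have : ((a/3).toNat : ℤ) < 3^k := by rw [hcast]; exact hilt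
      exact_mod_cast this
    · rcases hia' with h|h
      · left; rw [hcast]; exact h
      · right; rw [hcast]; exact h
  refine ⟨hM, ⟨⟨?_, ?_⟩, ?_⟩⟩
  · positivity
  · rw [div_le_one h3]
    have haub : (a:ℤ) ≤ 3^(k+1) := by omega
    have : (a:ℝ) ≤ ((3^(k+1) : ℤ) : ℝ) := by exact_mod_cast haub
    push_cast at this; linarith
  · -- not in DsetI J
    simp only [DsetI, Set.mem_iUnion, not_exists]
    intro m hm
    rcases Nat.eq_zero_or_pos m with rfl | hm1
    · simp [Dset]
    by_cases hmk : m ≤ k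
    · -- middle scales
      set d := k + 1 - m with hd
      have hdm : d + m = k + 1 := by omega
      have hdpos : (0:ℤ) < 3 ^ d := by positivity
      set c := a / 3 ^ d with hcdef
      have hmod := Int.emod_nonneg a (ne_of_gt hdpos)
      have hmod' := Int.emod_lt_of_pos a hdpos
      have hdecomp : a = 3^d * c + a % 3^d := (Int.mul_ediv_add_emod a (3^d)).symm
      have hclo' : (3:ℤ)^d * c ≤ a := by omega
      have hchi' : a ≤ 3^d * c + 3^d - 1 := by omega
      have hclo : (((3:ℤ)^d * c : ℤ) : ℝ) ≤ (a:ℝ) := by exact_mod_cast hclo'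
      have hchi : (a:ℝ) ≤ (((3:ℤ)^d * c + 3^d - 1 : ℤ) : ℝ) := by exact_mod_cast hchi' 
      have hpow_eq : (3:ℝ)^m * ((a:ℝ)/3^(k+1)) = (a:ℝ) / (((3:ℤ)^d : ℤ) : ℝ) := by
        have : (3:ℝ)^(k+1) = 3^d * 3^m := by rw [← pow_add]; congr 1; omega
        push_cast
        rw [this]
        field_simp
      refine not_mem_Dset (c := c) ?_ ?_ (H m hm hm1 hmk)
      · rw [hpow_eq, le_div_iff₀ (by positivity)]
        push_cast at hclo ⊢
        nlinarith
      · rw [hpow_eq, div_le_iff₀ (by positivity)]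
        push_cast at hchi ⊢
        nlinarith
    · -- fine scales m ≥ k+1
      push_neg at hmk
      have hpow_eq : (3:ℝ)^m * ((a:ℝ)/3^(k+1)) = ((a * 3 ^ (m - (k+1)) : ℤ) : ℝ) := by
        have h1 : (3:ℝ)^m = 3^(k+1) * 3^(m-(k+1)) := by rw [← pow_add]; congr 1; omega
        rw [h1]
        field_simp
        push_cast
        ring
      by_cases hv3 : (a * 3 ^ (m - (k+1))) % 3 = 1
      · refine not_mem_Dset (c := a * 3 ^ (m - (k+1)) - 1) ?_ ?_ (by omega)
        · rw [hpow_eq]; push_cast; linarith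
        · rw [hpow_eq]; push_cast; linarith
      · refine not_mem_Dset (c := a * 3 ^ (m - (k+1))) ?_ ?_ hv3
        · rw [hpow_eq]
        · rw [hpow_eq]; push_cast; linarith

/-- For infinite `I` and nonempty `J`, `M_I ∩ A_J` is dense in `A_J`. -/
theorem MsetI_inter_AsetI_dense (I J : Set ℕ) (hI : I.Infinite) (hJ : J.Nonempty) :
    AsetI J ⊆ closure (MsetI I ∩ AsetI J) := by
  intro x hx
  obtain ⟨⟨hx0, hx1⟩, hxD⟩ := hx
  have hxJ : ∀ m ∈ J, x ∉ Dset m := by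
    intro m hm hmem
    exact hxD (Set.mem_biUnion hm hmem)
  rw [Metric.mem_closure_iff]
  intro ε hε
  obtain ⟨N, hN⟩ := exists_nat_gt (4 / ε)
  obtain ⟨n, hnI, hn⟩ := hI.exists_gt N
  obtain ⟨k, rfl⟩ : ∃ k, n = k + 1 := ⟨n - 1, by omega⟩
  have hP : (0:ℝ) < 3 ^ (k+1) := by positivity
  have hNP : (N:ℝ) < 3 ^ (k+1) := by
    have h1 : N < 3 ^ (k+1) := lt_trans hn (Nat.lt_pow_self (by norm_num : 1 < 3))
    exact_mod_cast h1
  have hpow : (4:ℝ) / 3 ^ (k+1) < ε := by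
    rw [div_lt_iff₀ hP]
    rw [div_lt_iff₀ hε] at hN
    nlinarith
  set j := ⌊(3:ℝ)^k * x⌋ with hj
  have hj0 : 0 ≤ j := Int.floor_nonneg.mpr (mul_nonneg (by positivity) hx0)
  have hjx : (j:ℝ) ≤ 3^k * x := Int.floor_le _
  have hjx' : (3:ℝ)^k * x < j + 1 := Int.lt_floor_add_one _
  have hjub : j ≤ 3^k := by
    have h1 : (3:ℝ)^k * x ≤ ((3^k : ℤ) : ℝ) := by
      push_cast; nlinarith [pow_pos (show (0:ℝ) < 3 by norm_num) k]
    have := Int.floor_le_floor h1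
    rwa [Int.floor_intCast] at this
  -- floor identity
  have hfl : ∀ m : ℕ, m ≤ k → ⌊(3:ℝ)^m * x⌋ = j / 3 ^ (k - m) := by
    intro m hm
    have hdpos : (0:ℤ) < 3 ^ (k - m) := by positivity
    have heq : (3:ℝ)^m * x = ((3:ℝ)^k * x) / (((3:ℤ)^(k-m) : ℤ) : ℝ) := by
      have h1 : (3:ℝ)^k = 3^m * 3^(k-m) := by rw [← pow_add]; congr 1; omega
      push_cast
      rw [h1]
      field_simp
    rw [heq, floor_div_int' _ _ hdpos]
  by_cases hcase : x = 1 ∨ ∃ m ∈ J, 1 ≤ m ∧ m ≤ k ∧ (j / 3 ^ (k - m)) % 3 = 1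
  · -- left-move branch: use a = 3j - 1
    -- establish exactness and P
    have key : ((3:ℝ)^k * x = j) ∧ 1 ≤ j ∧
        (∀ m ∈ J, 1 ≤ m → m ≤ k → ((j - 1) / 3 ^ (k - m)) % 3 ≠ 1) := by
      rcases hcase with hx1' | ⟨m₀, hm₀J, hm₀1, hm₀k, hm₀mod⟩
      · have hjeq : j = 3^k := by
          rw [hj, hx1', mul_one]
          rw [show ((3:ℝ)^k) = (((3:ℤ)^k : ℤ) : ℝ) by push_cast; ring, Int.floor_intCast]
        refine ⟨?_, ?_, ?_⟩
        · rw [hx1', mul_one, hjeq]; push_cast; ring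
        · have h0 : (0:ℤ) < 3^k := by positivity
          rw [hjeq]; omega
        · intro m _ hm1 hmk
          have hdpos : (0:ℤ) < 3 ^ (k - m) := by positivity
          have hq : (j - 1) / 3 ^ (k - m) = 3 ^ m - 1 := by
            apply ediv_helper _ _ (3^(k-m) - 1) _ hdpos _ (by omega) (by omega)
            have h2 : (3:ℤ)^(k-m) * 3^m = 3^k := by rw [← pow_add]; congr 1; omega
            rw [hjeq, ← h2]
            ring
          rw [hq]
          have h3m : (3:ℤ)^m = 3^(m-1) * 3 := by
            rw [← pow_succ]; congr 1; omega
          omega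
      · set d₀ := k - m₀ with hd₀
        set c₀ := j / 3 ^ d₀ with hc₀
        have hfl₀ : ⌊(3:ℝ)^m₀ * x⌋ = c₀ := hfl m₀ hm₀k
        obtain ⟨μ, rfl⟩ : ∃ μ, m₀ = μ + 1 := ⟨m₀ - 1, by omega⟩
        have hint : (3:ℝ)^(μ+1) * x = (c₀ : ℝ) := by
          by_contra hne
          exact hxJ _ hm₀J (mem_Dset_of_floor hx0 hx1 (by rw [hfl₀]; exact hm₀mod)
            (by rw [hfl₀]; exact hne))
        have hc₀0 : 0 ≤ c₀ := by
          rw [← hfl₀]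
          exact Int.floor_nonneg.mpr (mul_nonneg (by positivity) hx0)
        have hc₀1 : 1 ≤ c₀ := by omega
        have hxval : (3:ℝ)^k * x = ((3^d₀ * c₀ : ℤ) : ℝ) := by
          have h1 : (3:ℝ)^k = 3^d₀ * 3^(μ+1) := by rw [← pow_add]; congr 1; omega
          push_cast
          rw [h1, mul_assoc, hint]
        have hjint : j = 3 ^ d₀ * c₀ := by
          rw [hj, hxval, Int.floor_intCast]
        refine ⟨?_, ?_, ?_⟩
        · rw [hxval, hjint]
        · have h1 : (0:ℤ) < 3^d₀ := by positivity
          rw [hjint]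
          calc (1:ℤ) ≤ 3^d₀ := by omega
            _ = 3^d₀ * 1 := by ring
            _ ≤ 3^d₀ * c₀ := by
                apply mul_le_mul_of_nonneg_left hc₀1 (le_of_lt h1)
        · intro m hmJ hm1 hmk
          set d := k - m with hd
          have hdpos : (0:ℤ) < 3 ^ d := by positivity
          by_cases hdd : d ≤ d₀
          · have hq : (j - 1) / 3 ^ d = c₀ * 3 ^ (d₀ - d) - 1 := by
              apply ediv_helper _ _ (3^d - 1) _ hdpos _ (by omega) (by omega)
              have hsplit2 : (3:ℤ)^d * 3^(d₀ - d) = 3^d₀ := by rw [← pow_add]; congr 1; omega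
              rw [hjint]
              linear_combination c₀ * hsplit2.symm
            rw [hq]
            by_cases hde : d = d₀
            · rw [hde]
              simp only [Nat.sub_self, pow_zero, mul_one]
              omega
            · have h1 : d < d₀ := by omega
              have h2 : (3:ℤ)^(d₀ - d) = 3^(d₀ - d - 1) * 3 := by
                rw [← pow_succ]; congr 1; omega
              rw [h2]
              have h5 : c₀ * (3^(d₀ - d - 1) * 3) - 1 = 3 * (c₀ * 3^(d₀ - d - 1)) - 1 := by ring
              rw [h5]
              omega
          · -- d > d₀, i.e. m < m₀
            push_neg at hdd
            have hrne : j % 3 ^ d ≠ 0 := by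
              intro h0
              obtain ⟨t, ht⟩ := Int.dvd_of_emod_eq_zero h0
              have h1 : (3:ℤ)^d = 3^d₀ * 3^(d - d₀) := by rw [← pow_add]; congr 1; omega
              have h2 : (3:ℤ)^d₀ * c₀ = 3^d₀ * (3^(d-d₀) * t) := by
                rw [← hjint, ht, h1]; ring
              have h3 : c₀ = 3^(d-d₀) * t := by
                have := mul_left_cancel₀ (a := (3:ℤ)^d₀) (by positivity) h2
                exact this
              have h4 : (3:ℤ)^(d-d₀) = 3^(d-d₀-1) * 3 := by
                rw [← pow_succ]; congr 1; omega
              rw [h4] at h3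
              have h6 : c₀ = 3 * (3^(d-d₀-1) * t) := by rw [h3]; ring
              omega
            have hmod0 := Int.emod_nonneg j (ne_of_gt hdpos)
            have hmod1 := Int.emod_lt_of_pos j hdpos
            have hq : (j - 1) / 3 ^ d = j / 3 ^ d := by
              apply ediv_helper _ _ (j % 3^d - 1) _ hdpos _ (by omega) (by omega)
              have := Int.mul_ediv_add_emod j (3^d)
              omega
            rw [hq]
            intro hKmod
            apply hxJ m hmJ
            obtain ⟨ν, rfl⟩ : ∃ ν, m = ν + 1 := ⟨m - 1, by omega⟩
            have hflm : ⌊(3:ℝ)^(ν+1) * x⌋ = j / 3 ^ d := hfl (ν+1) hmk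
            apply mem_Dset_of_floor hx0 hx1 (by rw [hflm]; exact hKmod)
            rw [hflm]
            intro heq2
            -- then j = 3^d * (j / 3^d), contradicting hrne
            have h1 : (3:ℝ)^k * x = ((3^d * (j / 3^d) : ℤ) : ℝ) := by
              have h2 : (3:ℝ)^k = 3^d * 3^(ν+1) := by rw [← pow_add]; congr 1; omega
              push_cast
              rw [h2, mul_assoc, heq2]
            have h3 : j = 3^d * (j / 3^d) := by
              conv_lhs => rw [hj]
              rw [h1, Int.floor_intCast]
            have := Int.mul_ediv_add_emod j (3^d)
            omega
    obtain ⟨hexact, hj1, hPP⟩ := key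
    refine ⟨((3*j - 1 : ℤ) : ℝ) / 3 ^ (k+1), ?_, ?_⟩
    · have hb := build (J := J) (k := k) (a := 3*j - 1) (by omega) (by omega)
        (by rw [show (3:ℤ)^(k+1) = 3 * 3^k by ring]; omega) ?_
      · exact ⟨Set.mem_biUnion hnI hb.1, hb.2⟩
      · intro m hm hm1 hmk
        have hdpos : (0:ℤ) < 3 ^ (k - m) := by positivity
        have hmod0 := Int.emod_nonneg (j-1) (ne_of_gt hdpos)
        have hmod1 := Int.emod_lt_of_pos (j-1) hdpos
        have hq : (3*j - 1) / 3 ^ (k + 1 - m) = (j-1) / 3 ^ (k - m) := by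
          have h1 : (3:ℤ)^(k+1-m) = 3 * 3^(k-m) := by
            rw [mul_comm, ← pow_succ]; congr 1; omega
          rw [h1]
          apply ediv_helper _ _ (3 * ((j-1) % 3^(k-m)) + 2) _ (by positivity) _ (by omega) (by omega)
          have h7 := Int.mul_ediv_add_emod (j-1) (3^(k-m))
          linear_combination 3 * h7.symm
        rw [hq]
        exact hPP m hm hm1 hmk
    · have hxeq : x = (j : ℝ) / 3^k := by
        rw [eq_div_iff (by positivity : ((3:ℝ)^k) ≠ 0)]
        rw [← hexact]; ring
      rw [Real.dist_eq]
      have hdiff : x - ((3*j - 1 : ℤ) : ℝ) / 3 ^ (k+1) = 1 / 3^(k+1) := by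
        rw [hxeq]
        push_cast
        field_simp
        ring
      rw [hdiff, abs_of_pos (by positivity)]
      calc (1:ℝ)/3^(k+1) ≤ 4/3^(k+1) := by gcongr <;> norm_num
        _ < ε := hpow
  · -- right-move branch: a = 3j + 1
    push_neg at hcase
    obtain ⟨hne1, hB⟩ := hcase
    have hxlt : x < 1 := lt_of_le_of_ne hx1 hne1
    have hjlt : j < 3^k := by
      rw [hj]
      rw [Int.floor_lt]
      push_cast
      nlinarith [pow_pos (show (0:ℝ) < 3 by norm_num) k]
    refine ⟨((3*j + 1 : ℤ) : ℝ) / 3 ^ (k+1), ?_, ?_⟩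
    · have hb := build (J := J) (k := k) (a := 3*j + 1) (by omega) (by omega)
        (by rw [show (3:ℤ)^(k+1) = 3 * 3^k by ring]; omega) ?_
      · exact ⟨Set.mem_biUnion hnI hb.1, hb.2⟩
      · intro m hm hm1 hmk
        have hdpos : (0:ℤ) < 3 ^ (k - m) := by positivity
        have hmod0 := Int.emod_nonneg j (ne_of_gt hdpos)
        have hmod1 := Int.emod_lt_of_pos j hdpos
        have hq : (3*j + 1) / 3 ^ (k + 1 - m) = j / 3 ^ (k - m) := by
          have h1 : (3:ℤ)^(k+1-m) = 3 * 3^(k-m) := by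
            rw [mul_comm, ← pow_succ]; congr 1; omega
          rw [h1]
          apply ediv_helper _ _ (3 * (j % 3^(k-m)) + 1) _ (by positivity) _ (by omega) (by omega)
          have h7 := Int.mul_ediv_add_emod j (3^(k-m))
          linear_combination 3 * h7.symm
        rw [hq]
        exact hB m hm hm1 hmk
    · rw [Real.dist_eq]
      have h1 : (3:ℝ)^(k+1) = 3 * 3^k := by ring
      have hy : ((3*j + 1 : ℤ) : ℝ) = 3*(j:ℝ) + 1 := by push_cast; ring
      rw [hy, abs_lt]
      have hxlt2 : x < (3*(j:ℝ)+3)/3^(k+1) := by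
        rw [lt_div_iff₀ hP, h1]
        nlinarith
      have hxge2 : (3*(j:ℝ))/3^(k+1) ≤ x := by
        rw [div_le_iff₀ hP, h1]
        nlinarith
      have e1 : (3*(j:ℝ)+1)/3^(k+1) - (3*(j:ℝ))/3^(k+1) = 1/3^(k+1) := by ring
      have e2 : (3*(j:ℝ)+3)/3^(k+1) - (3*(j:ℝ)+1)/3^(k+1) = 2/3^(k+1) := by ring
      have f1 : (1:ℝ)/3^(k+1) < ε := lt_of_le_of_lt (by gcongr <;> norm_num) hpow
      have f2 : (2:ℝ)/3^(k+1) < ε := lt_of_le_of_lt (by gcongr <;> norm_num) hpow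
      constructor
      · linarith
      · linarith
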